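/- In a Best-of-(2k+1) game, for every fixed serving schedule, the winner under the Catch-Up Rule is A if and only if b \geq a, where a is the number of losses among A's k+1 serves and b is the number of losses among B's k serves. Consequently, SR and CR always produce the same winner on any serving schedule. -/

import Mathlib

/-- Deterministic playout of a service game to `goal` points with a fixed serving
schedule.  `As i = true` means A wins his `i`-th serve (0-indexed); `Bs j = true`
means B wins her `j`-th serve.  `next prevSrv aWon` gives the next server
(`true` = A serves).  `i, j` count serves already used by A and B, `x, y` are the
scores, `srv` is the current server; returns `true` iff A wins the game.
`fuel` bounds the number of points played. -/
def playWinner (goal : ℕ) (next : Bool → Bool → Bool) (As Bs : ℕ → Bool) :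
    ℕ → ℕ → ℕ → ℕ → ℕ → Bool → Bool
  | 0, _, _, x, y, _ => decide (y < x)
  | fuel + 1, i, j, x, y, srv =>
    if goal ≤ x then true
    else if goal ≤ y then false
    else if srv then
      let aWon := As i
      playWinner goal next As Bs fuel (i + 1) j (if aWon then x + 1 else x)
        (if aWon then y else y + 1) (next srv aWon)
    else
      let aWon := !Bs j
      playWinner goal next As Bs fuel i (j + 1) (if aWon then x + 1 else x)
        (if aWon then y else y + 1) (next srv aWon)

/-- Standard Rule: the winner of the point serves next. -/
def nextSR : Bool → Bool → Bool := fun _ aWon => aWon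

/-- Catch-Up Rule: the loser of the point serves next. -/
def nextCR : Bool → Bool → Bool := fun _ aWon => !aWon


private def cnt (p : ℕ → Bool) (b : Bool) (n : ℕ) : ℕ :=
  ((Finset.range n).filter (fun i => p i = b)).card

private lemma cnt_succ (p : ℕ → Bool) (b : Bool) (n : ℕ) :
    cnt p b (n + 1) = cnt p b n + if p n = b then 1 else 0 := by
  unfold cnt
  rw [Finset.range_add_one, Finset.filter_insert]
  split_ifs with h
  · rw [Finset.card_insert_of_notMem (by simp)]
  · simp

private lemma cnt_sum (p : ℕ → Bool) (n : ℕ) : cnt p true n + cnt p false n = n := by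
  induction n with
  | zero => simp [cnt]
  | succ m ih => rw [cnt_succ, cnt_succ]; cases h : p m <;> simp [h] <;> omega

private lemma cnt_mono (p : ℕ → Bool) (b : Bool) {m n : ℕ} (h : m ≤ n) :
    cnt p b m ≤ cnt p b n :=
  Finset.card_le_card (Finset.filter_subset_filter _ (Finset.range_subset_range.2 h))

private lemma cnt_le_add (p : ℕ → Bool) (b : Bool) {m n : ℕ} (h : m ≤ n) :
    cnt p b n ≤ cnt p b m + (n - m) := by
  induction n with
  | zero => interval_cases m; simp
  | succ t ih =>
    rcases Nat.lt_or_ge m (t + 1) with h' | h'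
    · have := ih (Nat.lt_succ_iff.mp h')
      rw [cnt_succ]; split_ifs <;> omega
    · have : m = t + 1 := le_antisymm h h'
      subst this; simp

private lemma CR_general (k : ℕ) (As Bs : ℕ → Bool) :
    ∀ fuel i j x y srv,
      x = cnt As true i + cnt Bs false j →
      y = cnt As false i + cnt Bs true j →
      (srv = true → i = y ∧ j = x ∧ x ≤ k) →
      (srv = false → i = y + 1 ∧ x = j + 1 ∧ y ≤ k) →
      fuel + x + y = 2 * k + 2 →
      x ≤ k + 1 → y ≤ k + 1 →
      playWinner (k + 1) nextCR As Bs fuel i j x y srv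
        = decide (cnt As false (k + 1) ≤ cnt Bs false k) := by
  intro fuel
  induction fuel with
  | zero =>
    intro i j x y srv hx hy hA hB hfuel hx1 hy1
    exfalso
    cases srv
    · have := hB rfl; omega
    · have := hA rfl; omega
  | succ n ih =>
    intro i j x y srv hx hy hA hB hfuel hx1 hy1
    rw [playWinner]
    by_cases hxk : k + 1 ≤ x
    · rw [if_pos hxk]
      have hxe : x = k + 1 := le_antisymm hx1 hxk
      cases srv with
      | false =>
        obtain ⟨hi, hj, hyk⟩ := hB rfl
        have hj' : j = k := by omega
        rw [hj'] at hx
        have h1 : cnt As false (k + 1) ≤ cnt As false i + (k + 1 - i) :=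
          cnt_le_add _ _ (by omega)
        have h2 : cnt As true i + cnt As false i = i := cnt_sum As i
        have : cnt As false (k + 1) ≤ cnt Bs false k := by omega
        simp [this]
      | true =>
        have := hA rfl; omega
    · rw [if_neg hxk]
      by_cases hyk : k + 1 ≤ y
      · rw [if_pos hyk]
        have hye : y = k + 1 := le_antisymm hy1 hyk
        cases srv with
        | true =>
          obtain ⟨hi, hj, hxk'⟩ := hA rfl
          subst hi
          have h1 : cnt Bs false k ≤ cnt Bs false j + (k - j) :=
            cnt_le_add _ _ (by omega)
          have h2 : cnt Bs true j + cnt Bs false j = j := cnt_sum Bs j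
          rw [hye] at hy
          have : ¬ (cnt As false (k + 1) ≤ cnt Bs false k) := by omega
          simp [this]
        | false =>
          have := hB rfl; omega
      · rw [if_neg hyk]
        cases srv with
        | true =>
          obtain ⟨hi, hj, _⟩ := hA rfl
          rw [if_pos rfl]
          cases hAs : As i
          · simp only [hAs]
            show playWinner (k+1) nextCR As Bs n (i+1) j x (y+1) (nextCR true false) = _
            rw [show nextCR true false = true from rfl]
            apply ih
            · rw [hx, cnt_succ, hAs]; simp
            · rw [hy, cnt_succ, hAs]; simp; omega
            · intro _; refine ⟨by omega, by omega, by omega⟩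
            · intro h; exact absurd h (by simp)
            · omega
            · omega
            · omega
          · simp only [hAs]
            show playWinner (k+1) nextCR As Bs n (i+1) j (x+1) y (nextCR true true) = _
            rw [show nextCR true true = false from rfl]
            apply ih
            · rw [hx, cnt_succ, hAs]; simp; omega
            · rw [hy, cnt_succ, hAs]; simp
            · intro h; exact absurd h (by simp)
            · intro _; refine ⟨by omega, by omega, by omega⟩
            · omega
            · omega
            · omega
        | false =>
          obtain ⟨hi, hj, _⟩ := hB rfl
          rw [if_neg (by simp)]
          cases hBs : Bs j
          · simp only [hBs]
            show playWinner (k+1) nextCR As Bs n i (j+1) (x+1) y (nextCR false (!false)) = _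
            rw [show nextCR false (!false) = false from rfl]
            apply ih
            · rw [hx, cnt_succ, hBs]; simp; omega
            · rw [hy, cnt_succ, hBs]; simp
            · intro h; exact absurd h (by simp)
            · intro _; refine ⟨by omega, by omega, by omega⟩
            · omega
            · omega
            · omega
          · simp only [hBs]
            show playWinner (k+1) nextCR As Bs n i (j+1) x (y+1) (nextCR false (!true)) = _
            rw [show nextCR false (!true) = true from rfl]
            apply ih
            · rw [hx, cnt_succ, hBs]; simp
            · rw [hy, cnt_succ, hBs]; simp; omega
            · intro _; refine ⟨by omega, by omega, by omega⟩
            · intro h; exact absurd h (by simp)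
            · omega
            · omega
            · omega

private lemma SR_general (k : ℕ) (As Bs : ℕ → Bool) :
    ∀ fuel i j x y srv,
      x = cnt As true i + cnt Bs false j →
      y = cnt As false i + cnt Bs true j →
      (srv = true → i = x ∧ j = y ∧ y ≤ k) →
      (srv = false → i = x + 1 ∧ y = j + 1 ∧ x ≤ k) →
      fuel + x + y = 2 * k + 2 →
      x ≤ k + 1 → y ≤ k + 1 →
      playWinner (k + 1) nextSR As Bs fuel i j x y srv
        = decide (cnt As false (k + 1) ≤ cnt Bs false k) := by
  intro fuel
  induction fuel with
  | zero =>
    intro i j x y srv hx hy hA hB hfuel hx1 hy1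
    exfalso
    cases srv
    · have := hB rfl; omega
    · have := hA rfl; omega
  | succ n ih =>
    intro i j x y srv hx hy hA hB hfuel hx1 hy1
    rw [playWinner]
    by_cases hxk : k + 1 ≤ x
    · rw [if_pos hxk]
      have hxe : x = k + 1 := le_antisymm hx1 hxk
      cases srv with
      | true =>
        obtain ⟨hi, hj, hyk⟩ := hA rfl
        have hi' : i = k + 1 := by omega
        rw [hi'] at hx
        have h1 : cnt Bs false j ≤ cnt Bs false k := cnt_mono _ _ (by omega)
        have h2 : cnt As true (k + 1) + cnt As false (k + 1) = k + 1 := cnt_sum As (k + 1)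
        have : cnt As false (k + 1) ≤ cnt Bs false k := by omega
        simp [this]
      | false =>
        have := hB rfl; omega
    · rw [if_neg hxk]
      by_cases hyk : k + 1 ≤ y
      · rw [if_pos hyk]
        have hye : y = k + 1 := le_antisymm hy1 hyk
        cases srv with
        | false =>
          obtain ⟨hi, hj, hxk'⟩ := hB rfl
          have hj' : j = k := by omega
          rw [hj'] at hy
          have h1 : cnt As false i ≤ cnt As false (k + 1) := cnt_mono _ _ (by omega)
          have h2 : cnt Bs true k + cnt Bs false k = k := cnt_sum Bs k
          have : ¬ (cnt As false (k + 1) ≤ cnt Bs false k) := by omega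
          simp [this]
        | true =>
          have := hA rfl; omega
      · rw [if_neg hyk]
        cases srv with
        | true =>
          obtain ⟨hi, hj, _⟩ := hA rfl
          rw [if_pos rfl]
          cases hAs : As i
          · simp only [hAs]
            show playWinner (k+1) nextSR As Bs n (i+1) j x (y+1) (nextSR true false) = _
            rw [show nextSR true false = false from rfl]
            apply ih
            · rw [hx, cnt_succ, hAs]; simp
            · rw [hy, cnt_succ, hAs]; simp; omega
            · intro h; exact absurd h (by simp)
            · intro _; refine ⟨by omega, by omega, by omega⟩
            · omega
            · omega
            · omega
          · simp only [hAs]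
            show playWinner (k+1) nextSR As Bs n (i+1) j (x+1) y (nextSR true true) = _
            rw [show nextSR true true = true from rfl]
            apply ih
            · rw [hx, cnt_succ, hAs]; simp; omega
            · rw [hy, cnt_succ, hAs]; simp
            · intro _; refine ⟨by omega, by omega, by omega⟩
            · intro h; exact absurd h (by simp)
            · omega
            · omega
            · omega
        | false =>
          obtain ⟨hi, hj, _⟩ := hB rfl
          rw [if_neg (by simp)]
          cases hBs : Bs j
          · simp only [hBs]
            show playWinner (k+1) nextSR As Bs n i (j+1) (x+1) y (nextSR false (!false)) = _
            rw [show nextSR false (!false) = true from rfl]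
            apply ih
            · rw [hx, cnt_succ, hBs]; simp; omega
            · rw [hy, cnt_succ, hBs]; simp
            · intro _; refine ⟨by omega, by omega, by omega⟩
            · intro h; exact absurd h (by simp)
            · omega
            · omega
            · omega
          · simp only [hBs]
            show playWinner (k+1) nextSR As Bs n i (j+1) x (y+1) (nextSR false (!true)) = _
            rw [show nextSR false (!true) = false from rfl]
            apply ih
            · rw [hx, cnt_succ, hBs]; simp
            · rw [hy, cnt_succ, hBs]; simp; omega
            · intro h; exact absurd h (by simp)
            · intro _; refine ⟨by omega, by omega, by omega⟩
            · omega
            · omega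
            · omega

/-- In a Best-of-(2k+1) game, for every fixed serving schedule, the winner under the
Catch-Up Rule (A serving first) is A if and only if `a ≤ b`, where `a` is the number
of losses among A's first `k+1` serves and `b` the number of losses among B's first
`k` serves.  Consequently, SR and CR produce the same winner on any schedule. -/
theorem CR_winner_iff (k : ℕ) (As Bs : ℕ → Bool) :
    ((playWinner (k + 1) nextCR As Bs (2 * k + 2) 0 0 0 0 true = true)
        ↔ ((Finset.range (k + 1)).filter (fun i => As i = false)).card
            ≤ ((Finset.range k).filter (fun j => Bs j = false)).card) ∧
      playWinner (k + 1) nextCR As Bs (2 * k + 2) 0 0 0 0 true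
        = playWinner (k + 1) nextSR As Bs (2 * k + 2) 0 0 0 0 true := by
  have hCR := CR_general k As Bs (2 * k + 2) 0 0 0 0 true
    (by simp [cnt]) (by simp [cnt])
    (fun _ => ⟨rfl, rfl, by omega⟩) (fun h => absurd h (by simp))
    (by omega) (by omega) (by omega)
  have hSR := SR_general k As Bs (2 * k + 2) 0 0 0 0 true
    (by simp [cnt]) (by simp [cnt])
    (fun _ => ⟨rfl, rfl, by omega⟩) (fun h => absurd h (by simp))
    (by omega) (by omega) (by omega)
  constructor
  · rw [hCR]
    simp [cnt]
    exact ⟨of_decide_eq_true, fun h => decide_eq_true h⟩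
  · rw [hCR, hSR]
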